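/- Let α = φ_D(x) be a Lasso minimizer, and suppose there is a set I of p−s coordinates with |⟨D_i, x − Dα⟩| < λ − τ_s for all i ∈ I, where τ_s > 2ν. Then for any perturbation v with ‖v‖₂ ≤ ν, the Lasso minimizer α̃ = φ_D(x+v) satisfies α̃_i = 0 for all i ∈ I. -/
import Mathlib


open scoped BigOperators
open Finset

noncomputable def l2 {n : ℕ} (x : Fin n → ℝ) : ℝ := Real.sqrt (∑ i, (x i) ^ 2)

noncomputable def l1 {n : ℕ} (x : Fin n → ℝ) : ℝ := ∑ i, |x i|

noncomputable def inp {n : ℕ} (x y : Fin n → ℝ) : ℝ := ∑ i, x i * y i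

/-- The Lasso objective `z ↦ (1/2)‖x − Dz‖₂² + λ‖z‖₁`. -/
noncomputable def lassoObj {d p : ℕ} (D : Matrix (Fin d) (Fin p) ℝ) (lam : ℝ)
    (x : Fin d → ℝ) (z : Fin p → ℝ) : ℝ :=
  (1 / 2) * (l2 (x - D.mulVec z)) ^ 2 + lam * l1 z

lemma l2_sq {n : ℕ} (x : Fin n → ℝ) : l2 x ^ 2 = ∑ i, (x i) ^ 2 :=
  Real.sq_sqrt (by positivity)

lemma l2_nonneg {n : ℕ} (x : Fin n → ℝ) : 0 ≤ l2 x := Real.sqrt_nonneg _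

lemma inp_le_l2 {n : ℕ} (x y : Fin n → ℝ) : inp x y ≤ l2 x * l2 y :=
  Real.sum_mul_le_sqrt_mul_sqrt _ _ _

lemma abs_inp_le_l2 {n : ℕ} (x y : Fin n → ℝ) : |inp x y| ≤ l2 x * l2 y := by
  rcases abs_cases (inp x y) with ⟨h, _⟩ | ⟨h, _⟩
  · rw [h]; exact inp_le_l2 x y
  · rw [h]
    have := inp_le_l2 x (-y)
    have hxy : inp x (-y) = -inp x y := by
      simp [inp, Finset.sum_neg_distrib, mul_neg]
    have hl2 : l2 (-y : Fin n → ℝ) = l2 y := by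
      simp [l2]
    rw [hxy, hl2] at this
    exact this

/-- The basic one-coordinate perturbation inequality coming from minimality. -/
lemma kkt_basic {d p : ℕ} (D : Matrix (Fin d) (Fin p) ℝ) (lam : ℝ)
    (hcols : ∀ i, l2 (fun r => D r i) = 1)
    (b : Fin d → ℝ) (α : Fin p → ℝ)
    (hmin : ∀ z, lassoObj D lam b α ≤ lassoObj D lam b z) (j : Fin p) (t : ℝ) :
    t * inp (fun r => D r j) (b - D.mulVec α) ≤ t ^ 2 / 2 + lam * (|α j + t| - |α j|) := by
  set z := Function.update α j (α j + t) with hzdef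
  have hmz : ∀ r, b r - D.mulVec z r = (b r - D.mulVec α r) - t * D r j := by
    intro r
    have hzk : ∀ k, z k = α k + (if k = j then t else 0) := by
      intro k
      by_cases hk : k = j
      · subst hk; simp [hzdef]
      · simp [hzdef, Function.update_of_ne hk, hk]
    have : D.mulVec z r = D.mulVec α r + t * D r j := by
      simp only [Matrix.mulVec, dotProduct]
      calc ∑ k, D r k * z k
          = ∑ k, (D r k * α k + if k = j then D r k * t else 0) := by
            apply Finset.sum_congr rfl
            intro k _
            rw [hzk k]
            by_cases hk : k = j <;> simp [hk] <;> ring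
        _ = (∑ k, D r k * α k) + t * D r j := by
            rw [Finset.sum_add_distrib, Finset.sum_ite_eq' Finset.univ j (fun k => D r k * t)]
            simp [mul_comm]
    rw [this]; ring
  have hcol : (∑ r, (D r j) ^ 2) = 1 := by
    have := hcols j
    have h2 : l2 (fun r => D r j) ^ 2 = 1 := by rw [this]; norm_num
    rw [l2_sq] at h2
    exact h2
  have hsq : l2 (b - D.mulVec z) ^ 2
      = l2 (b - D.mulVec α) ^ 2 - 2 * t * inp (fun r => D r j) (b - D.mulVec α) + t ^ 2 := by
    rw [l2_sq, l2_sq]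
    have : ∀ r, (b - D.mulVec z) r = (b - D.mulVec α) r - t * D r j := by
      intro r; simpa using hmz r
    rw [Finset.sum_congr rfl (fun r _ => by rw [this r])]
    have expand : ∀ r, ((b - D.mulVec α) r - t * D r j) ^ 2
        = (b - D.mulVec α) r ^ 2 - 2 * t * (D r j * (b - D.mulVec α) r) + t ^ 2 * (D r j) ^ 2 := by
      intro r; ring
    rw [Finset.sum_congr rfl (fun r _ => expand r)]
    rw [Finset.sum_add_distrib, Finset.sum_sub_distrib, ← Finset.mul_sum, ← Finset.mul_sum, hcol]
    simp [inp]
  have hl1 : l1 z = l1 α + (|α j + t| - |α j|) := by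
    have : l1 z - l1 α = |α j + t| - |α j| := by
      simp only [l1, ← Finset.sum_sub_distrib]
      rw [Finset.sum_eq_single j]
      · simp [hzdef, Function.update_self]
      · intro k _ hk
        simp [hzdef, Function.update_of_ne hk]
      · intro h; exact absurd (Finset.mem_univ j) h
    linarith
  have := hmin z
  simp only [lassoObj] at this
  rw [hsq, hl1] at this
  nlinarith

/-- KKT: the dual certificate is bounded by `lam`. -/
lemma kkt_abs_le {d p : ℕ} (D : Matrix (Fin d) (Fin p) ℝ) (lam : ℝ) (hlam : 0 < lam)
    (hcols : ∀ i, l2 (fun r => D r i) = 1)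
    (b : Fin d → ℝ) (α : Fin p → ℝ)
    (hmin : ∀ z, lassoObj D lam b α ≤ lassoObj D lam b z) (j : Fin p) :
    |inp (fun r => D r j) (b - D.mulVec α)| ≤ lam := by
  set c := inp (fun r => D r j) (b - D.mulVec α) with hc
  refine le_of_forall_pos_le_add ?_
  intro ε hε
  have h := kkt_basic D lam hcols b α hmin j (if 0 ≤ c then ε else -ε)
  have habs : ∀ t : ℝ, |α j + t| - |α j| ≤ |t| := by
    intro t
    have := abs_add_le (α j) t
    linarith [abs_add_le (α j) t]
  by_cases hsign : 0 ≤ c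
  · simp only [hsign, if_pos] at h
    have h2 := habs ε
    have hεle : ε * c ≤ ε ^ 2 / 2 + lam * ε := by
      have : lam * (|α j + ε| - |α j|) ≤ lam * ε := by
        have := habs ε
        have hε' : |ε| = ε := abs_of_pos hε
        nlinarith
      linarith
    have : c ≤ ε / 2 + lam := by nlinarith
    rw [abs_of_nonneg hsign]
    linarith
  · push_neg at hsign
    simp only [not_le.mpr hsign, if_neg, if_false] at h
    have h2 := habs (-ε)
    have hεle : -ε * c ≤ ε ^ 2 / 2 + lam * ε := by
      have : lam * (|α j + -ε| - |α j|) ≤ lam * ε := by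
        have := habs (-ε)
        have hε' : |(-ε : ℝ)| = ε := by rw [abs_neg, abs_of_pos hε]
        nlinarith
      have : (-ε) ^ 2 / 2 = ε ^ 2 / 2 := by ring
      nlinarith [kkt_basic D lam hcols b α hmin j (-ε), habs (-ε),
        abs_neg (ε), abs_of_pos hε]
    have : -c ≤ ε / 2 + lam := by nlinarith
    rw [abs_of_neg hsign]
    linarith

/-- KKT: complementary slackness style identity. -/
lemma kkt_eq {d p : ℕ} (D : Matrix (Fin d) (Fin p) ℝ) (lam : ℝ) (hlam : 0 < lam)
    (hcols : ∀ i, l2 (fun r => D r i) = 1)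
    (b : Fin d → ℝ) (α : Fin p → ℝ)
    (hmin : ∀ z, lassoObj D lam b α ≤ lassoObj D lam b z) (j : Fin p) :
    inp (fun r => D r j) (b - D.mulVec α) * α j = lam * |α j| := by
  set c := inp (fun r => D r j) (b - D.mulVec α) with hc
  by_cases hz : α j = 0
  · simp [hz]
  · -- lower bound: c * α j ≥ lam * |α j|
    have hge : lam * |α j| ≤ c * α j := by
      refine le_of_forall_pos_le_add ?_
      intro ε hε
      -- use t = -δ * α j with δ = min ε' 1 small
      set δ := min (ε / (α j ^ 2)) 1 with hδdef
      have hαsq : 0 < α j ^ 2 := by positivity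
      have hδpos : 0 < δ := lt_min (by positivity) one_pos
      have hδ1 : δ ≤ 1 := min_le_right _ _
      have h := kkt_basic D lam hcols b α hmin j (-δ * α j)
      have habs : |α j + -δ * α j| = (1 - δ) * |α j| := by
        have : α j + -δ * α j = (1 - δ) * α j := by ring
        rw [this, abs_mul, abs_of_nonneg (by linarith : (0:ℝ) ≤ 1 - δ)]
      rw [habs] at h
      have h' : -δ * α j * c ≤ (δ * α j) ^ 2 / 2 + lam * (-δ * |α j|) := by
        have : (-δ * α j) ^ 2 = (δ * α j) ^ 2 := by ring
        have h2 : (1 - δ) * |α j| - |α j| = -δ * |α j| := by ring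
        rw [h2] at h
        linarith [h, this ▸ h]
      -- divide by δ
      have : lam * |α j| ≤ c * α j + δ * α j ^ 2 / 2 := by
        have hδne : δ ≠ 0 := ne_of_gt hδpos
        have := mul_le_mul_of_nonneg_left h' (le_of_lt (inv_pos.mpr hδpos))
        field_simp at this
        nlinarith [h']
      have hδε : δ * α j ^ 2 / 2 ≤ ε := by
        have h1 : δ ≤ ε / α j ^ 2 := min_le_left _ _
        have := mul_le_mul_of_nonneg_right h1 (le_of_lt hαsq)
        rw [div_mul_cancel₀ _ (ne_of_gt hαsq)] at this
        linarith
      linarith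
    have hle : c * α j ≤ lam * |α j| := by
      have h1 := kkt_abs_le D lam hlam hcols b α hmin j
      calc c * α j ≤ |c * α j| := le_abs_self _
        _ = |c| * |α j| := abs_mul _ _
        _ ≤ lam * |α j| := mul_le_mul_of_nonneg_right h1 (abs_nonneg _)
    linarith

/-- preservation of an inactive set with positive encoder gap under
adversarial perturbations of the input. -/
theorem stmt10 {d p s : ℕ} (hs : s < p) (D : Matrix (Fin d) (Fin p) ℝ) (lam ν τ : ℝ)
    (hlam : 0 < lam) (hν : 0 ≤ ν)
    (hcols : ∀ i, l2 (fun r => D r i) = 1)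
    (x v : Fin d → ℝ) (hv : l2 v ≤ ν)
    (α : Fin p → ℝ) (hmin : ∀ z, lassoObj D lam x α ≤ lassoObj D lam x z)
    (αt : Fin p → ℝ) (hmint : ∀ z, lassoObj D lam (x + v) αt ≤ lassoObj D lam (x + v) z)
    (I : Finset (Fin p)) (hI : I.card = p - s)
    (hgap : ∀ i ∈ I, |inp (fun r => D r i) (x - D.mulVec α)| < lam - τ)
    (hτ : 2 * ν < τ) :
    ∀ i ∈ I, αt i = 0 := by
  -- notation
  set c : Fin p → ℝ := fun j => inp (fun r => D r j) (x - D.mulVec α) with hcdef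
  set ct : Fin p → ℝ := fun j => inp (fun r => D r j) ((x + v) - D.mulVec αt) with hctdef
  set u : Fin d → ℝ := fun r => D.mulVec α r - D.mulVec αt r with hudef
  -- monotonicity: ∑ (c j - ct j) * (α j - αt j) ≥ 0
  have hmono : 0 ≤ ∑ j, (c j - ct j) * (α j - αt j) := by
    apply Finset.sum_nonneg
    intro j _
    have h1 := kkt_eq D lam hlam hcols x α hmin j
    have h2 := kkt_eq D lam hlam hcols (x + v) αt hmint j
    have h3 := kkt_abs_le D lam hlam hcols x α hmin j
    have h4 := kkt_abs_le D lam hlam hcols (x + v) αt hmint j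
    have h5 : c j * αt j ≤ lam * |αt j| := by
      calc c j * αt j ≤ |c j * αt j| := le_abs_self _
        _ = |c j| * |αt j| := abs_mul _ _
        _ ≤ lam * |αt j| := mul_le_mul_of_nonneg_right h3 (abs_nonneg _)
    have h6 : ct j * α j ≤ lam * |α j| := by
      calc ct j * α j ≤ |ct j * α j| := le_abs_self _
        _ = |ct j| * |α j| := abs_mul _ _
        _ ≤ lam * |α j| := mul_le_mul_of_nonneg_right h4 (abs_nonneg _)
    nlinarith [h1, h2, h5, h6]
  -- rewrite the sum as an inner product in ℝ^d
  have hswap : ∑ j, (c j - ct j) * (α j - αt j)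
      = inp (fun r => (x r - D.mulVec α r) - (x r + v r - D.mulVec αt r)) u := by
    have hcj : ∀ j, c j - ct j
        = ∑ r, D r j * ((x r - D.mulVec α r) - (x r + v r - D.mulVec αt r)) := by
      intro j
      simp only [hcdef, hctdef, inp, Pi.sub_apply, Pi.add_apply]
      rw [← Finset.sum_sub_distrib]
      apply Finset.sum_congr rfl
      intro r _
      ring
    have hur : ∀ r, u r = ∑ j, D r j * (α j - αt j) := by
      intro r
      simp only [hudef, Matrix.mulVec, dotProduct]
      rw [← Finset.sum_sub_distrib]
      apply Finset.sum_congr rfl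
      intro j _
      ring
    calc ∑ j, (c j - ct j) * (α j - αt j)
        = ∑ j, ∑ r, (D r j * ((x r - D.mulVec α r) - (x r + v r - D.mulVec αt r)))
            * (α j - αt j) := by
          apply Finset.sum_congr rfl
          intro j _
          rw [hcj j, Finset.sum_mul]
      _ = ∑ r, ∑ j, (D r j * ((x r - D.mulVec α r) - (x r + v r - D.mulVec αt r)))
            * (α j - αt j) := Finset.sum_comm
      _ = ∑ r, ((x r - D.mulVec α r) - (x r + v r - D.mulVec αt r)) * u r := by
          apply Finset.sum_congr rfl
          intro r _
          rw [hur r, Finset.mul_sum]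
          apply Finset.sum_congr rfl
          intro j _
          ring
      _ = inp (fun r => (x r - D.mulVec α r) - (x r + v r - D.mulVec αt r)) u := rfl
  -- bound on l2 u
  have hval : inp (fun r => (x r - D.mulVec α r) - (x r + v r - D.mulVec αt r)) u
      = - inp v u - inp u u := by
    simp only [inp]
    have hpt : ∀ r, ((x r - D.mulVec α r) - (x r + v r - D.mulVec αt r)) * u r
        = -(v r * u r) - u r * u r := by
      intro r; simp only [hudef]; ring
    rw [Finset.sum_congr rfl (fun r _ => hpt r), Finset.sum_sub_distrib,
      Finset.sum_neg_distrib]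
  have huu : inp u u = l2 u ^ 2 := by
    rw [l2_sq]; simp only [inp, sq]
  have h7 : l2 u ^ 2 ≤ ν * l2 u := by
    have h8 : inp u u ≤ - inp v u := by
      rw [hswap, hval] at hmono; linarith
    have h9 : - inp v u ≤ |inp v u| := neg_le_abs _
    have h10 := abs_inp_le_l2 v u
    have h11 : l2 v * l2 u ≤ ν * l2 u :=
      mul_le_mul_of_nonneg_right hv (l2_nonneg u)
    linarith [huu]
  have hu : l2 u ≤ ν := by
    by_contra h
    push_neg at h
    nlinarith [l2_nonneg u]
  -- final argument
  intro i hi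
  by_contra hne
  have hkt := kkt_eq D lam hlam hcols (x + v) αt hmint i
  have h4 := kkt_abs_le D lam hlam hcols (x + v) αt hmint i
  have hlow : lam ≤ |ct i| := by
    have habs : 0 < |αt i| := abs_pos.mpr hne
    have h1 : ct i * αt i ≤ |ct i| * |αt i| := by
      rw [← abs_mul]; exact le_abs_self _
    have h2 : ct i * αt i = lam * |αt i| := by
      simpa only [hctdef] using hkt
    nlinarith
  have hdec : ct i = c i + inp (fun r => D r i) v + inp (fun r => D r i) u := by
    simp only [hctdef, hcdef, inp]
    rw [← Finset.sum_add_distrib, ← Finset.sum_add_distrib]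
    apply Finset.sum_congr rfl
    intro r _
    simp only [hudef, Pi.sub_apply, Pi.add_apply]
    ring
  have hb1 : |inp (fun r => D r i) v| ≤ ν := by
    have h := abs_inp_le_l2 (fun r => D r i) v
    rw [hcols i, one_mul] at h
    linarith
  have hb2 : |inp (fun r => D r i) u| ≤ ν := by
    have h := abs_inp_le_l2 (fun r => D r i) u
    rw [hcols i, one_mul] at h
    linarith
  have hgapi : |c i| < lam - τ := by
    simpa only [hcdef] using hgap i hi
  have htri : |ct i| ≤ |c i| + |inp (fun r => D r i) v| + |inp (fun r => D r i) u| := by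
    rw [hdec]
    calc |c i + inp (fun r => D r i) v + inp (fun r => D r i) u|
        ≤ |c i + inp (fun r => D r i) v| + |inp (fun r => D r i) u| := abs_add_le _ _
      _ ≤ |c i| + |inp (fun r => D r i) v| + |inp (fun r => D r i) u| := by
          linarith [abs_add_le (c i) (inp (fun r => D r i) v)]
  linarith
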